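/- Suppose G : ℝ^p → ℝ^p satisfies ⟨Gx − Gy, x − y⟩ ≥ (1/L)·E_ξ[‖G_ξ x − G_ξ y‖²] for all x, y (co-coercivity in expectation), T is multi-valued and ρ-co-hypomonotone (⟨v_x − v_y, x − y⟩ ≥ −ρ‖v_x − v_y‖² for v_x ∈ Tx, v_y ∈ Ty) with ρ ≥ 0, and τ > 0 satisfies Lρ ≤ 1/(1+τ). Then Φ := G + T satisfies, for all x, y and w_x = Gx + v_x ∈ Φx, w_y = Gy + v_y ∈ Φy: ⟨w_x − w_y, x − y⟩ ≥ −((1+τ)ρ/τ)‖w_x − w_y‖² + (1/L − (1+τ)ρ)·E_ξ[‖G_ξ x − G_ξ y‖²]. -/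

import Mathlib

open MeasureTheory

lemma jensen_sq {Ω : Type*} [MeasurableSpace Ω] (μ : Measure Ω) [IsProbabilityMeasure μ]
    {E : Type*} [NormedAddCommGroup E] [InnerProductSpace ℝ E] [CompleteSpace E]
    (f : Ω → E) (hf : Integrable f μ) (hf2 : Integrable (fun ω => ‖f ω‖ ^ 2) μ) :
    ‖∫ ω, f ω ∂μ‖ ^ 2 ≤ ∫ ω, ‖f ω‖ ^ 2 ∂μ := by
  set m := ∫ ω, f ω ∂μ with hm
  have hi1 : Integrable (fun ω => (inner ℝ m (f ω) : ℝ)) μ := hf.const_inner m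
  have hi2 : Integrable (fun ω => 2 * (inner ℝ m (f ω) : ℝ) - ‖m‖ ^ 2) μ := by
    exact (hi1.const_mul 2).sub (integrable_const _)
  have key : ∫ ω, ‖f ω - m‖ ^ 2 ∂μ = (∫ ω, ‖f ω‖ ^ 2 ∂μ) - ‖m‖ ^ 2 := by
    have h1 : ∀ ω, ‖f ω - m‖ ^ 2 = ‖f ω‖ ^ 2 - (2 * (inner ℝ m (f ω) : ℝ) - ‖m‖ ^ 2) := by
      intro ω
      rw [norm_sub_sq_real, real_inner_comm]
      ring
    simp_rw [h1]
    rw [integral_sub hf2 hi2, integral_sub (hi1.const_mul 2) (integrable_const _),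
      integral_const_mul, integral_inner hf m, integral_const]
    simp [real_inner_self_eq_norm_sq]
    rw [← hm, real_inner_self_eq_norm_sq]
    ring
  have hnn : 0 ≤ ∫ ω, ‖f ω - m‖ ^ 2 ∂μ := integral_nonneg (fun ω => sq_nonneg _)
  linarith [key ▸ hnn]

theorem stmt3 {p : ℕ} {Ω : Type*} [MeasurableSpace Ω] (μ : Measure Ω) [IsProbabilityMeasure μ]
    (G : EuclideanSpace ℝ (Fin p) → EuclideanSpace ℝ (Fin p))
    (Gξ : Ω → EuclideanSpace ℝ (Fin p) → EuclideanSpace ℝ (Fin p))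
    (T : EuclideanSpace ℝ (Fin p) → Set (EuclideanSpace ℝ (Fin p)))
    (L ρ τ : ℝ) (hL : 0 < L) (hρ : 0 ≤ ρ) (hτ : 0 < τ) (hLρ : L * ρ ≤ 1 / (1 + τ))
    (hunbiased : ∀ x, G x = ∫ ω, Gξ ω x ∂μ)
    (hint : ∀ x y, Integrable (fun ω => Gξ ω x - Gξ ω y) μ)
    (hint2 : ∀ x y, Integrable (fun ω => ‖Gξ ω x - Gξ ω y‖ ^ 2) μ)
    (hcoco : ∀ x y, (inner ℝ (G x - G y) (x - y) : ℝ)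
      ≥ (1 / L) * ∫ ω, ‖Gξ ω x - Gξ ω y‖ ^ 2 ∂μ)
    (hT : ∀ x y vx vy, vx ∈ T x → vy ∈ T y →
      (inner ℝ (vx - vy) (x - y) : ℝ) ≥ -ρ * ‖vx - vy‖ ^ 2) :
    ∀ x y vx vy, vx ∈ T x → vy ∈ T y →
      (inner ℝ ((G x + vx) - (G y + vy)) (x - y) : ℝ) ≥
        -((1 + τ) * ρ / τ) * ‖(G x + vx) - (G y + vy)‖ ^ 2
        + (1 / L - (1 + τ) * ρ) * ∫ ω, ‖Gξ ω x - Gξ ω y‖ ^ 2 ∂μ := by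
  intro x y vx vy hvx hvy
  set I := ∫ ω, ‖Gξ ω x - Gξ ω y‖ ^ 2 ∂μ with hI
  have hInn : (0:ℝ) ≤ I := integral_nonneg (fun ω => sq_nonneg _)
  -- Jensen: ‖Gx - Gy‖² ≤ I
  have hg : ‖G x - G y‖ ^ 2 ≤ I := by
    by_cases hx : Integrable (fun ω => Gξ ω x) μ
    · have hy : Integrable (fun ω => Gξ ω y) μ := by
        have h := hx.sub (hint x y)
        exact h.congr (Filter.Eventually.of_forall fun ω => by simp)
      have hGdiff : G x - G y = ∫ ω, (Gξ ω x - Gξ ω y) ∂μ := by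
        rw [hunbiased x, hunbiased y, integral_sub hx hy]
      rw [hGdiff]
      exact jensen_sq μ _ (hint x y) (hint2 x y)
    · have hy : ¬ Integrable (fun ω => Gξ ω y) μ := by
        intro hy
        have h := hy.add (hint x y)
        exact hx (h.congr (Filter.Eventually.of_forall fun ω => by simp))
      rw [hunbiased x, hunbiased y, integral_undef hx, integral_undef hy, sub_self]
      simpa using hInn
  -- Notation
  set g := G x - G y with hgdef
  set v := vx - vy with hvdef
  have hw : (G x + vx) - (G y + vy) = g + v := by rw [hgdef, hvdef]; abel
  rw [hw]
  have h1 : (inner ℝ g (x - y) : ℝ) ≥ (1 / L) * I := hcoco x y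
  have h2 : (inner ℝ v (x - y) : ℝ) ≥ -ρ * ‖v‖ ^ 2 := hT x y vx vy hvx hvy
  have hsum : (inner ℝ (g + v) (x - y) : ℝ) = inner ℝ g (x - y) + inner ℝ v (x - y) :=
    inner_add_left g v (x - y)
  -- Young: ‖v‖² ≤ (1+1/τ)‖g+v‖² + (1+τ)‖g‖²
  have hyoung : ‖v‖ ^ 2 ≤ (1 + 1/τ) * ‖g + v‖ ^ 2 + (1 + τ) * ‖g‖ ^ 2 := by
    have hv' : v = (g + v) - g := by abel
    have hexp : ‖v‖ ^ 2 = ‖g + v‖ ^ 2 - 2 * (inner ℝ (g + v) g : ℝ) + ‖g‖ ^ 2 := by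
      conv_lhs => rw [hv']
      rw [norm_sub_sq_real]
    have hcs : (inner ℝ (g + v) g : ℝ) ≥ -(‖g + v‖ * ‖g‖) := by
      have h := abs_real_inner_le_norm (g + v) g
      cases abs_le.mp h with
      | intro h' _ => linarith
    have key : (1/τ) * ‖g + v‖ ^ 2 + τ * ‖g‖ ^ 2 ≥ 2 * (‖g + v‖ * ‖g‖) := by
      rw [ge_iff_le, ← sub_nonneg]
      have heq : (1/τ) * ‖g + v‖ ^ 2 + τ * ‖g‖ ^ 2 - 2 * (‖g + v‖ * ‖g‖)
          = (1/τ) * (‖g + v‖ - τ * ‖g‖) ^ 2 := by field_simp; ring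
      rw [heq]; positivity
    nlinarith
  rw [hsum]
  have hco : (1 + τ) * ρ / τ = ρ * (1 + 1/τ) := by field_simp; ring
  rw [hco]
  have hρV : ρ * ‖v‖ ^ 2 ≤ ρ * ((1 + 1/τ) * ‖g + v‖ ^ 2 + (1 + τ) * ‖g‖ ^ 2) :=
    mul_le_mul_of_nonneg_left hyoung hρ
  have hgI' : ρ * ‖g‖ ^ 2 ≤ ρ * I := mul_le_mul_of_nonneg_left hg hρ
  have hgI2 : τ * (ρ * ‖g‖ ^ 2) ≤ τ * (ρ * I) := mul_le_mul_of_nonneg_left hgI' hτ.le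
  linarith
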